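/- Let G be a finite simple undirected graph with connected vertices s ≠ t, and let G' be obtained from G by attaching q new pendant vertices adjacent only to s and q new pendant vertices adjacent only to t. If a vertex v ∉ {s, t} of G lies on every shortest s–t path in G, then the betweenness centrality of v in G' is at least q². -/
import Mathlib


/-- The number of shortest `s`–`t` paths in `G` (walks of minimal length, which are
automatically paths). -/
noncomputable def numShortest {V : Type*} (G : SimpleGraph V) (s t : V) : ℕ :=
  {p : G.Walk s t | p.length = G.dist s t}.ncard

/-- The number of shortest `s`–`t` paths in `G` passing through the vertex `v`. -/
noncomputable def numShortestThrough {V : Type*} (G : SimpleGraph V) (s t v : V) : ℕ :=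
  {p : G.Walk s t | p.length = G.dist s t ∧ v ∈ p.support}.ncard

/-- Betweenness centrality of `v`: the sum, over unordered pairs of distinct vertices
both different from `v`, of the fraction of shortest paths through `v`
(here written as half the sum over ordered pairs; the ratio is `0` when there is no
path between the pair). -/
noncomputable def betweenness {V : Type*} [Fintype V] [DecidableEq V]
    (G : SimpleGraph V) (v : V) : ℝ :=
  (1 / 2) * ∑ p : V × V,
    if p.1 ≠ v ∧ p.2 ≠ v ∧ p.1 ≠ p.2 then
      (numShortestThrough G p.1 p.2 v : ℝ) / (numShortest G p.1 p.2)
    else 0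

section Aux

open SimpleGraph

variable {V : Type*} [DecidableEq V]
variable {G G' : SimpleGraph V} {s t : V} {X Y : Finset V}

private lemma adjX (hXY : Disjoint X Y) (hsX : s ∉ X ∪ Y) (htX : t ∉ X ∪ Y)
    (hiso : ∀ z ∈ X ∪ Y, ∀ a, ¬ G.Adj z a)
    (hG' : ∀ a b, G'.Adj a b ↔ G.Adj a b ∨ (a ∈ X ∧ b = s) ∨ (b ∈ X ∧ a = s) ∨
      (a ∈ Y ∧ b = t) ∨ (b ∈ Y ∧ a = t))
    {x : V} (hx : x ∈ X) (a : V) : G'.Adj x a ↔ a = s := by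
  constructor
  · intro h
    rcases (hG' x a).1 h with h | ⟨_, h⟩ | ⟨haX, hxs⟩ | ⟨hxY, _⟩ | ⟨_, hxt⟩
    · exact absurd h (hiso x (Finset.mem_union_left _ hx) a)
    · exact h
    · exact absurd (Finset.mem_union_left Y (hxs ▸ hx)) hsX
    · exact absurd hxY (Finset.disjoint_left.mp hXY hx)
    · exact absurd (Finset.mem_union_left Y (hxt ▸ hx)) htX
  · rintro rfl
    exact (hG' x _).2 (Or.inr (Or.inl ⟨hx, rfl⟩))

private lemma adjY (hXY : Disjoint X Y) (hsX : s ∉ X ∪ Y) (htX : t ∉ X ∪ Y)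
    (hiso : ∀ z ∈ X ∪ Y, ∀ a, ¬ G.Adj z a)
    (hG' : ∀ a b, G'.Adj a b ↔ G.Adj a b ∨ (a ∈ X ∧ b = s) ∨ (b ∈ X ∧ a = s) ∨
      (a ∈ Y ∧ b = t) ∨ (b ∈ Y ∧ a = t))
    {y : V} (hy : y ∈ Y) (a : V) : G'.Adj y a ↔ a = t := by
  constructor
  · intro h
    rcases (hG' y a).1 h with h | ⟨hyX, _⟩ | ⟨_, hys⟩ | ⟨_, h⟩ | ⟨_, hyt⟩
    · exact absurd h (hiso y (Finset.mem_union_right _ hy) a)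
    · exact absurd hyX (Finset.disjoint_right.mp hXY hy)
    · exact absurd (Finset.mem_union_right X (hys ▸ hy)) hsX
    · exact h
    · exact absurd (Finset.mem_union_right X (hyt ▸ hy)) htX
  · rintro rfl
    exact (hG' y _).2 (Or.inr (Or.inr (Or.inr (Or.inl ⟨hy, rfl⟩))))

/-- Any `G'`-walk between vertices outside the pendant sets projects to a `G`-walk
which is no longer and whose support is contained in the original support. -/
private lemma project (hXY : Disjoint X Y) (hsX : s ∉ X ∪ Y) (htX : t ∉ X ∪ Y)
    (hiso : ∀ z ∈ X ∪ Y, ∀ a, ¬ G.Adj z a)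
    (hG' : ∀ a b, G'.Adj a b ↔ G.Adj a b ∨ (a ∈ X ∧ b = s) ∨ (b ∈ X ∧ a = s) ∨
      (a ∈ Y ∧ b = t) ∨ (b ∈ Y ∧ a = t)) :
    ∀ n (a b : V), a ∉ X ∪ Y → b ∉ X ∪ Y → ∀ p : G'.Walk a b, p.length ≤ n →
      ∃ p' : G.Walk a b, p'.length ≤ p.length ∧ ∀ u ∈ p'.support, u ∈ p.support := by
  intro n
  induction n with
  | zero =>
    intro a b ha hb p hp
    cases p with
    | nil => exact ⟨SimpleGraph.Walk.nil, le_refl _, fun u hu => hu⟩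
    | cons h rest => simp [SimpleGraph.Walk.length_cons] at hp
  | succ n ih =>
    intro a b ha hb p hp
    cases p with
    | nil => exact ⟨SimpleGraph.Walk.nil, le_refl _, fun u hu => hu⟩
    | cons h rest =>
      rename_i c
      by_cases hc : c ∈ X ∪ Y
      · rcases Finset.mem_union.mp hc with hcX | hcY
        · -- c ∈ X, so a = s and the walk doubles back through c
          have has : a = s := (adjX hXY hsX htX hiso hG' hcX a).1 h.symm
          cases rest with
          | nil => exact absurd hc hb
          | cons h2 rest2 =>
            rename_i c2
            have hc2 : c2 = s := (adjX hXY hsX htX hiso hG' hcX c2).1 h2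
            have hc2a : c2 = a := hc2.trans has.symm
            subst hc2a
            have hlen : rest2.length ≤ n := by
              simp only [SimpleGraph.Walk.length_cons] at hp; omega
            obtain ⟨p', hl, hs⟩ := ih _ _ ha hb rest2 hlen
            refine ⟨p', by simp only [SimpleGraph.Walk.length_cons]; omega, ?_⟩
            intro u hu
            simp only [SimpleGraph.Walk.support_cons, List.mem_cons]
            exact Or.inr (Or.inr (hs u hu))
        · have has : a = t := (adjY hXY hsX htX hiso hG' hcY a).1 h.symm
          cases rest with
          | nil => exact absurd hc hb
          | cons h2 rest2 =>
            rename_i c2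
            have hc2 : c2 = t := (adjY hXY hsX htX hiso hG' hcY c2).1 h2
            have hc2a : c2 = a := hc2.trans has.symm
            subst hc2a
            have hlen : rest2.length ≤ n := by
              simp only [SimpleGraph.Walk.length_cons] at hp; omega
            obtain ⟨p', hl, hs⟩ := ih _ _ ha hb rest2 hlen
            refine ⟨p', by simp only [SimpleGraph.Walk.length_cons]; omega, ?_⟩
            intro u hu
            simp only [SimpleGraph.Walk.support_cons, List.mem_cons]
            exact Or.inr (Or.inr (hs u hu))
      · have hGad : G.Adj a c := by
          rcases (hG' a c).1 h with h' | ⟨haX, _⟩ | ⟨hcX, _⟩ | ⟨haY, _⟩ | ⟨hcY, _⟩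
          · exact h'
          · exact absurd (Finset.mem_union_left _ haX) ha
          · exact absurd (Finset.mem_union_left _ hcX) hc
          · exact absurd (Finset.mem_union_right _ haY) ha
          · exact absurd (Finset.mem_union_right _ hcY) hc
        have hlen : rest.length ≤ n := by
          simp only [SimpleGraph.Walk.length_cons] at hp; omega
        obtain ⟨p', hl, hs⟩ := ih c b hc hb rest hlen
        refine ⟨SimpleGraph.Walk.cons hGad p',
          by simp only [SimpleGraph.Walk.length_cons]; omega, ?_⟩
        intro u hu
        simp only [SimpleGraph.Walk.support_cons, List.mem_cons] at hu ⊢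
        rcases hu with rfl | hu
        · exact Or.inl rfl
        · exact Or.inr (hs u hu)

/-- Any `G'`-walk from a non-pendant vertex to a vertex of `Y` contains a strictly
shorter walk to `t` inside it. -/
private lemma tailY (hXY : Disjoint X Y) (hsX : s ∉ X ∪ Y) (htX : t ∉ X ∪ Y)
    (hiso : ∀ z ∈ X ∪ Y, ∀ a, ¬ G.Adj z a)
    (hG' : ∀ a b, G'.Adj a b ↔ G.Adj a b ∨ (a ∈ X ∧ b = s) ∨ (b ∈ X ∧ a = s) ∨
      (a ∈ Y ∧ b = t) ∨ (b ∈ Y ∧ a = t)) :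
    ∀ n (b : V), b ∉ X ∪ Y → ∀ y, y ∈ Y → ∀ p : G'.Walk b y, p.length ≤ n →
      ∃ p2 : G'.Walk b t, p2.length + 1 ≤ p.length ∧ ∀ u ∈ p2.support, u ∈ p.support := by
  intro n
  induction n with
  | zero =>
    intro b hb y hy p hp
    cases p with
    | nil => exact absurd (Finset.mem_union_right X hy) hb
    | cons h rest => simp [SimpleGraph.Walk.length_cons] at hp
  | succ n ih =>
    intro b hb y hy p hp
    cases p with
    | nil => exact absurd (Finset.mem_union_right X hy) hb
    | cons h rest =>
      rename_i c
      by_cases hcY : c ∈ Y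
      · have hbt : b = t := (adjY hXY hsX htX hiso hG' hcY b).1 h.symm
        subst hbt
        refine ⟨SimpleGraph.Walk.nil, by simp [SimpleGraph.Walk.length_cons], ?_⟩
        intro u hu
        simp only [SimpleGraph.Walk.support_nil, List.mem_singleton] at hu
        subst hu
        simp [SimpleGraph.Walk.support_cons]
      · by_cases hcX : c ∈ X
        · have hbs : b = s := (adjX hXY hsX htX hiso hG' hcX b).1 h.symm
          cases rest with
          | nil => exact absurd hy (Finset.disjoint_left.mp hXY hcX)
          | cons h2 rest2 =>
            rename_i c2
            have hc2 : c2 = s := (adjX hXY hsX htX hiso hG' hcX c2).1 h2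
            have hc2b : c2 = b := hc2.trans hbs.symm
            subst hc2b
            have hlen : rest2.length ≤ n := by
              simp only [SimpleGraph.Walk.length_cons] at hp; omega
            obtain ⟨p2, hl, hs⟩ := ih _ hb y hy rest2 hlen
            refine ⟨p2, by simp only [SimpleGraph.Walk.length_cons]; omega, ?_⟩
            intro u hu
            simp only [SimpleGraph.Walk.support_cons, List.mem_cons]
            exact Or.inr (Or.inr (hs u hu))
        · have hc : c ∉ X ∪ Y := fun hcc => (Finset.mem_union.mp hcc).elim hcX hcY
          have hlen : rest.length ≤ n := by
            simp only [SimpleGraph.Walk.length_cons] at hp; omega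
          obtain ⟨p2, hl, hs⟩ := ih c hc y hy rest hlen
          refine ⟨SimpleGraph.Walk.cons h p2,
            by simp only [SimpleGraph.Walk.length_cons]; omega, ?_⟩
          intro u hu
          simp only [SimpleGraph.Walk.support_cons, List.mem_cons] at hu ⊢
          rcases hu with rfl | hu
          · exact Or.inl rfl
          · exact Or.inr (hs u hu)

end Aux

theorem betweenness_ge_q_sq_of_pendants {V : Type*} [Fintype V] [DecidableEq V]
    (G G' : SimpleGraph V) (s t : V) (q : ℕ) (X Y : Finset V)
    (hst : s ≠ t) (hreach : G.Reachable s t)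
    (hX : X.card = q) (hY : Y.card = q) (hXY : Disjoint X Y)
    (hsX : s ∉ X ∪ Y) (htX : t ∉ X ∪ Y)
    (hiso : ∀ z ∈ X ∪ Y, ∀ a, ¬ G.Adj z a)
    (hG' : ∀ a b, G'.Adj a b ↔ G.Adj a b ∨ (a ∈ X ∧ b = s) ∨ (b ∈ X ∧ a = s) ∨
      (a ∈ Y ∧ b = t) ∨ (b ∈ Y ∧ a = t))
    (v : V) (hvs : v ≠ s) (hvt : v ≠ t) (hvXY : v ∉ X ∪ Y)
    (hvon : ∀ p : G.Walk s t, p.length = G.dist s t → v ∈ p.support) :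
    (q ^ 2 : ℝ) ≤ betweenness G' v := by
  classical
  haveI : G'.LocallyFinite := fun w => Set.Finite.fintype (Set.toFinite _)
  have hle : G ≤ G' := fun {a b} h => (hG' a b).2 (Or.inl h)
  set d := G.dist s t with hd
  have hreach' : G'.Reachable s t := hreach.mono hle
  obtain ⟨W, hW⟩ := hreach'.exists_walk_length_eq_dist
  -- distance in G' between s and t is d
  have hdd : G'.dist s t = d := by
    apply le_antisymm
    · obtain ⟨W0, hW0⟩ := hreach.exists_walk_length_eq_dist
      have := SimpleGraph.dist_le (W0.mapLe hle)
      rwa [SimpleGraph.Walk.length_map, hW0] at this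
    · obtain ⟨p', hl, _⟩ := project hXY hsX htX hiso hG' W.length s t hsX htX W le_rfl
      calc d ≤ p'.length := SimpleGraph.dist_le p'
        _ ≤ W.length := hl
        _ = G'.dist s t := hW
  -- key structural fact about walks from X to Y
  have key : ∀ x ∈ X, ∀ y ∈ Y, ∀ p : G'.Walk x y,
      d + 2 ≤ p.length ∧ (p.length = d + 2 → v ∈ p.support) := by
    intro x hx y hy p
    cases p with
    | nil => exact absurd hy (Finset.disjoint_left.mp hXY hx)
    | cons h rest =>
      rename_i c
      have hcs : c = s := (adjX hXY hsX htX hiso hG' hx c).1 h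
      subst hcs
      obtain ⟨p2, hl2, hs2⟩ :=
        tailY hXY hsX htX hiso hG' rest.length c hsX y hy rest le_rfl
      obtain ⟨p3, hl3, hs3⟩ :=
        project hXY hsX htX hiso hG' p2.length c t hsX htX p2 le_rfl
      have hd3 : d ≤ p3.length := SimpleGraph.dist_le p3
      constructor
      · simp only [SimpleGraph.Walk.length_cons]; omega
      · intro hlen
        simp only [SimpleGraph.Walk.length_cons] at hlen
        have hp3 : p3.length = d := by omega
        have hv3 : v ∈ p3.support := hvon p3 hp3
        have hvr : v ∈ rest.support := hs2 v (hs3 v hv3)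
        simp only [SimpleGraph.Walk.support_cons, List.mem_cons]
        exact Or.inr hvr
  -- explicit shortest walks from X to Y
  have hxw : ∀ x ∈ X, ∀ y ∈ Y, ∃ p : G'.Walk x y, p.length = d + 2 := by
    intro x hx y hy
    have hxs : G'.Adj x s := (adjX hXY hsX htX hiso hG' hx s).2 rfl
    have hty : G'.Adj t y := ((adjY hXY hsX htX hiso hG' hy t).2 rfl).symm
    refine ⟨SimpleGraph.Walk.cons hxs (W.concat hty), ?_⟩
    rw [SimpleGraph.Walk.length_cons, SimpleGraph.Walk.length_concat, hW, hdd]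
  have hdxy : ∀ x ∈ X, ∀ y ∈ Y, G'.dist x y = d + 2 := by
    intro x hx y hy
    obtain ⟨p, hp⟩ := hxw x hx y hy
    apply le_antisymm
    · have := SimpleGraph.dist_le p; omega
    · obtain ⟨p0, hp0⟩ := (SimpleGraph.Walk.reachable p).exists_walk_length_eq_dist
      have := (key x hx y hy p0).1; omega
  -- the ratio is 1 for suitable pairs
  have ratio : ∀ a b : V, G'.dist a b = d + 2 →
      (∃ p : G'.Walk a b, p.length = d + 2) →
      (∀ p : G'.Walk a b, p.length = d + 2 → v ∈ p.support) →
      (numShortestThrough G' a b v : ℝ) / (numShortest G' a b) = 1 := by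
    intro a b hdist hex hall
    obtain ⟨p0, hp0⟩ := hex
    have hfin : {p : G'.Walk a b | p.length = G'.dist a b}.Finite := Set.toFinite _
    have hset : {p : G'.Walk a b | p.length = G'.dist a b ∧ v ∈ p.support} =
        {p : G'.Walk a b | p.length = G'.dist a b} := by
      ext p
      simp only [Set.mem_setOf_eq, and_iff_left_iff_imp]
      intro hp
      exact hall p (by rw [hp, hdist])
    have hne : numShortest G' a b ≠ 0 := by
      have hpos : 0 < {p : G'.Walk a b | p.length = G'.dist a b}.ncard := by
        rw [Set.ncard_pos hfin]
        exact ⟨p0, by simp only [Set.mem_setOf_eq, hp0, hdist]⟩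
      unfold numShortest
      omega
    unfold numShortestThrough numShortest
    unfold numShortest at hne
    rw [hset]
    exact div_self (by exact_mod_cast hne)
  -- for ordered pairs from X × Y or Y × X the summand equals 1
  have hterm : ∀ a b : V, (a ∈ X ∧ b ∈ Y) ∨ (a ∈ Y ∧ b ∈ X) →
      (numShortestThrough G' a b v : ℝ) / (numShortest G' a b) = 1 := by
    rintro a b (⟨ha, hb⟩ | ⟨ha, hb⟩)
    · exact ratio a b (hdxy a ha b hb) (hxw a ha b hb)
        (fun p hp => (key a ha b hb p).2 hp)
    · refine ratio a b ?_ ?_ ?_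
      · rw [SimpleGraph.dist_comm]; exact hdxy b hb a ha
      · obtain ⟨p, hp⟩ := hxw b hb a ha
        exact ⟨p.reverse, by rw [SimpleGraph.Walk.length_reverse, hp]⟩
      · intro p hp
        have := (key b hb a ha p.reverse).2
          (by rw [SimpleGraph.Walk.length_reverse, hp])
        rw [SimpleGraph.Walk.support_reverse, List.mem_reverse] at this
        exact this
  -- summation
  set f : V × V → ℝ := fun p =>
    if p.1 ≠ v ∧ p.2 ≠ v ∧ p.1 ≠ p.2 then
      (numShortestThrough G' p.1 p.2 v : ℝ) / (numShortest G' p.1 p.2)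
    else 0 with hf
  have hf0 : ∀ p : V × V, 0 ≤ f p := by
    intro p
    simp only [hf]
    split
    · positivity
    · exact le_refl 0
  set S : Finset (V × V) := X ×ˢ Y ∪ Y ×ˢ X with hSdef
  have hvX : ∀ a ∈ X, a ≠ v := fun a ha h =>
    hvXY (Finset.mem_union_left _ (h ▸ ha))
  have hvY : ∀ a ∈ Y, a ≠ v := fun a ha h =>
    hvXY (Finset.mem_union_right _ (h ▸ ha))
  have hS1 : ∀ p ∈ S, f p = 1 := by
    intro p hp
    simp only [hSdef, Finset.mem_union, Finset.mem_product] at hp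
    have hcond : p.1 ≠ v ∧ p.2 ≠ v ∧ p.1 ≠ p.2 := by
      rcases hp with ⟨h1, h2⟩ | ⟨h1, h2⟩
      · exact ⟨hvX _ h1, hvY _ h2, fun h =>
          Finset.disjoint_left.mp hXY h1 (h ▸ h2)⟩
      · exact ⟨hvY _ h1, hvX _ h2, fun h =>
          Finset.disjoint_left.mp hXY h2 (h ▸ h1)⟩
    simp only [hf, if_pos hcond]
    exact hterm p.1 p.2 hp
  have hcard : S.card = 2 * q ^ 2 := by
    have hdisj : Disjoint (X ×ˢ Y) (Y ×ˢ X) := by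
      rw [Finset.disjoint_left]
      rintro ⟨a, b⟩ hp hp'
      rw [Finset.mem_product] at hp hp'
      exact Finset.disjoint_left.mp hXY hp.1 hp'.1
    rw [hSdef, Finset.card_union_of_disjoint hdisj, Finset.card_product,
      Finset.card_product, hX, hY]
    ring
  have hsum : (2 * q ^ 2 : ℝ) ≤ ∑ p : V × V, f p := by
    calc (2 * q ^ 2 : ℝ) = ∑ p ∈ S, f p := by
          rw [Finset.sum_congr rfl hS1, Finset.sum_const, hcard]
          simp
      _ ≤ ∑ p : V × V, f p :=
          Finset.sum_le_sum_of_subset_of_nonneg (Finset.subset_univ S)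
            (fun i _ _ => hf0 i)
  unfold betweenness
  rw [← hf]
  linarith
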